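/- Let r ≥ 1 and let b_0, b_1, …, b_{r−1} ∈ {0,1}. There exists a natural number n whose canonical φ-representation has nonnegative-position digits exactly b_0, …, b_{r−1} — i.e., there exists n ∈ ℕ with d_j(n) = b_j for 0 ≤ j ≤ r−1 and d_j(n) = 0 for all j ≥ r — if and only if (a) b_j·b_{j+1} = 0 for all 0 ≤ j < r−1, and (b) there is no integer i ≥ 0 with 2i+1 ≤ r−1 such that b_0 = 1, b_{2i+1} = 1, and b_k = 0 for all 1 ≤ k ≤ 2i (i.e., the word b_{r−1} ⋯ b_0 has no suffix of the form 1(00)^i 1). -/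

import Mathlib

/-- The golden ratio φ = (1+√5)/2. -/
noncomputable def phi : ℝ := (1 + Real.sqrt 5) / 2

/-- `a` is a finite φ-representation of the real number `x`: a finitely supported
function `a : ℤ → {0,1}` with `x = Σ_{i ∈ ℤ} a(i) · φ^i`. -/
def IsPhiRep (x : ℝ) (a : ℤ →₀ ℕ) : Prop :=
  (∀ i, a i ≤ 1) ∧ x = ∑ i ∈ a.support, (a i : ℝ) * phi ^ i

/-- `a` is the canonical φ-representation of `x`: a finite φ-representation with
no two adjacent digits equal to 1. -/
def IsCanonRep (x : ℝ) (a : ℤ →₀ ℕ) : Prop :=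
  IsPhiRep x a ∧ ∀ i : ℤ, a i * a (i + 1) = 0

lemma phi_pos : 0 < phi := by
  unfold phi
  have := Real.sqrt_nonneg 5
  linarith

lemma one_lt_phi : 1 < phi := by
  unfold phi
  have : (1:ℝ) < Real.sqrt 5 := by
    have := Real.sq_sqrt (by norm_num : (5:ℝ) ≥ 0)
    nlinarith [Real.sqrt_nonneg 5]
  linarith

lemma phi_sq : phi ^ 2 = phi + 1 := by
  unfold phi
  have h : Real.sqrt 5 ^ 2 = 5 := Real.sq_sqrt (by norm_num)
  ring_nf
  nlinarith [h]

lemma phi_ne : phi ≠ 0 := ne_of_gt phi_pos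

-- workhorse: phi ^ a = phi ^ (a-1) + phi ^ (a-2)
lemma phi_rec (a : ℤ) : phi ^ a = phi ^ (a-1) + phi ^ (a-2) := by
  have h2 : phi ^ a = phi ^ (a-2) * phi ^ (2:ℤ) := by
    rw [← zpow_add₀ phi_ne]; ring_nf
  have : phi ^ (2:ℤ) = phi + 1 := by
    rw [show (2:ℤ) = (2:ℕ) by rfl, zpow_natCast]; exact phi_sq
  rw [h2, this, mul_add, mul_one, ← zpow_add_one₀ phi_ne]
  ring_nf

lemma phi_rec' (a b c : ℤ) (h1 : b = a - 1) (h2 : c = a - 2) :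
    phi ^ a = phi ^ b + phi ^ c := by subst h1; subst h2; exact phi_rec a

lemma phi_zpow_pos (a : ℤ) : 0 < phi ^ a := zpow_pos phi_pos a

lemma phi_zpow_lt {a b : ℤ} (h : a < b) : phi ^ a < phi ^ b :=
  zpow_lt_zpow_right₀ one_lt_phi h

lemma phi_zpow_le {a b : ℤ} (h : a ≤ b) : phi ^ a ≤ phi ^ b :=
  zpow_le_zpow_right₀ (le_of_lt one_lt_phi) h

def Sparse (A : Finset ℤ) : Prop := ∀ i ∈ A, i + 1 ∉ A

noncomputable def pval (A : Finset ℤ) : ℝ := ∑ i ∈ A, phi ^ i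

lemma pval_nonneg (A : Finset ℤ) : 0 ≤ pval A :=
  Finset.sum_nonneg fun i _ => le_of_lt (phi_zpow_pos i)

lemma pval_lt (A : Finset ℤ) (m : ℤ) (hs : Sparse A) (hm : ∀ i ∈ A, i ≤ m) :
    pval A < phi ^ (m + 1) := by
  induction A using Finset.strongInduction generalizing m with
  | _ A ih =>
    rcases A.eq_empty_or_nonempty with rfl | hne
    · simpa [pval] using phi_zpow_pos (m+1)
    · set t := A.max' hne with ht
      have htA : t ∈ A := A.max'_mem hne
      have ht1 : t ≤ m := hm t htA
      have hsub : A.erase t ⊂ A := Finset.erase_ssubset htA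
      have hsp : Sparse (A.erase t) := by
        intro i hi
        have := hs i (Finset.mem_of_mem_erase hi)
        intro h; exact this (Finset.mem_of_mem_erase h)
      have hbd : ∀ i ∈ A.erase t, i ≤ t - 2 := by
        intro i hi
        have hiA := Finset.mem_of_mem_erase hi
        have hile : i ≤ t := A.le_max' i hiA
        have hne' : i ≠ t := Finset.ne_of_mem_erase hi
        -- also i ≠ t - 1 since (t-1)+1 = t ∈ A and sparse
        have : i ≠ t - 1 := by
          intro h; subst h
          exact hs (t-1) hiA (by simpa using htA)
        omega
      have h1 : pval (A.erase t) < phi ^ (t - 1) := by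
        have := ih (A.erase t) hsub (t-2) hsp hbd
        rwa [show t - 2 + 1 = t - 1 by ring] at this
      have h2 : pval A = phi ^ t + pval (A.erase t) := by
        unfold pval
        rw [← Finset.add_sum_erase _ _ htA]
      have h3 : phi ^ t + phi ^ (t-1) = phi ^ (t+1) := (phi_rec' (t+1) t (t-1) (by ring) (by ring)).symm
      have := phi_zpow_le (show t + 1 ≤ m + 1 by omega)
      linarith

lemma pval_ge (A : Finset ℤ) {t : ℤ} (ht : t ∈ A) : phi ^ t ≤ pval A := by
  unfold pval
  rw [← Finset.add_sum_erase _ _ ht]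
  have := pval_nonneg (A.erase t)
  unfold pval at this; linarith


lemma max_eq_of_pval_eq {A B : Finset ℤ} (hA : Sparse A) (hB : Sparse B)
    (h : pval A = pval B) (hne : A.Nonempty) (hBne : B.Nonempty) :
    A.max' hne = B.max' hBne := by
  by_contra hne'
  rcases lt_or_gt_of_ne hne' with hlt | hlt
  · have h1 : pval A < phi ^ (A.max' hne + 1) :=
      pval_lt A _ hA (fun i hi => A.le_max' i hi)
    have h2 : phi ^ (A.max' hne + 1) ≤ phi ^ (B.max' hBne) := phi_zpow_le (by omega)
    have h3 := pval_ge B (B.max'_mem hBne)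
    linarith
  · have h1 : pval B < phi ^ (B.max' hBne + 1) :=
      pval_lt B _ hB (fun i hi => B.le_max' i hi)
    have h2 : phi ^ (B.max' hBne + 1) ≤ phi ^ (A.max' hne) := phi_zpow_le (by omega)
    have h3 := pval_ge A (A.max'_mem hne)
    linarith

lemma sparse_erase {A : Finset ℤ} (hA : Sparse A) (t : ℤ) : Sparse (A.erase t) := by
  intro i hi h
  exact hA i (Finset.mem_of_mem_erase hi) (Finset.mem_of_mem_erase h)

lemma pval_inj {A B : Finset ℤ} (hA : Sparse A) (hB : Sparse B) (h : pval A = pval B) :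
    A = B := by
  induction A using Finset.strongInduction generalizing B with
  | _ A ih =>
    rcases A.eq_empty_or_nonempty with rfl | hne
    · rcases B.eq_empty_or_nonempty with rfl | hBne
      · rfl
      · exfalso
        have h1 := pval_ge B (B.max'_mem hBne)
        have h2 := phi_zpow_pos (B.max' hBne)
        simp only [pval, Finset.sum_empty] at h h1
        linarith
    · rcases B.eq_empty_or_nonempty with rfl | hBne
      · exfalso
        have h1 := pval_ge A (A.max'_mem hne)
        have h2 := phi_zpow_pos (A.max' hne)
        simp only [pval, Finset.sum_empty] at h h1
        linarith
      · have hst := max_eq_of_pval_eq hA hB h hne hBne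
        set t := A.max' hne with hts
        have hsA : t ∈ A := A.max'_mem hne
        have htB : t ∈ B := hst ▸ B.max'_mem hBne
        have hA' : pval A = phi ^ t + pval (A.erase t) := by
          unfold pval; rw [← Finset.add_sum_erase _ _ hsA]
        have hB' : pval B = phi ^ t + pval (B.erase t) := by
          unfold pval; rw [← Finset.add_sum_erase _ _ htB]
        have heq : pval (A.erase t) = pval (B.erase t) := by linarith
        have := ih (A.erase t) (Finset.erase_ssubset hsA) (sparse_erase hA t)
          (sparse_erase hB t) heq
        have htAB : A = insert t (A.erase t) := (Finset.insert_erase hsA).symm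
        have htBB : B = insert t (B.erase t) := (Finset.insert_erase htB).symm
        rw [htAB, htBB, this]

def Luc : ℕ → ℕ
  | 0 => 2
  | 1 => 1
  | n + 2 => Luc (n+1) + Luc n

lemma luc_real (j : ℕ) : (Luc j : ℝ) = phi ^ (j:ℤ) + (-1)^j * phi ^ (-(j:ℤ)) := by
  induction j using Nat.twoStepInduction with
  | zero => simp [Luc]; norm_num
  | one =>
    simp only [Luc]
    have e : phi ^ (1:ℤ) = phi ^ (0:ℤ) + phi ^ (-1:ℤ) := phi_rec' 1 0 (-1) (by ring) (by ring)
    push_cast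
    simp only [zpow_one, zpow_zero] at e ⊢
    rw [show ((-1:ℤ)) = -(1:ℤ) by ring] at e ⊢
    linarith [e]
  | more n ih1 ih2 =>
    have key : phi ^ ((n:ℤ)+2) = phi ^ ((n:ℤ)+1) + phi ^ (n:ℤ) :=
      phi_rec' ((n:ℤ)+2) _ _ (by ring) (by ring)
    have key2 : phi ^ (-(n:ℤ)) = phi ^ (-(n:ℤ)-1) + phi ^ (-(n:ℤ)-2) :=
      phi_rec' (-(n:ℤ)) _ _ (by ring) (by ring)
    have hL : (Luc (n+2) : ℝ) = (Luc (n+1) : ℝ) + (Luc n : ℝ) := by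
      simp only [Luc]; push_cast; ring
    have c1 : ((n+1:ℕ):ℤ) = (n:ℤ)+1 := by push_cast; ring
    have c2 : ((n+2:ℕ):ℤ) = (n:ℤ)+2 := by push_cast; ring
    rw [hL, ih2, ih1, c1, c2,
      show -((n:ℤ)+1) = -(n:ℤ)-1 by ring, show -((n:ℤ)+2) = -(n:ℤ)-2 by ring,
      pow_succ, pow_succ]
    linear_combination -key + ((-1:ℝ)^n) * key2

-- chain of negative indices: -(m+1), -(m+3), ..., -(m+2s-1)
def negChain (m : ℕ) (s : ℕ) : Finset ℤ :=
  (Finset.range s).image (fun j : ℕ => -((m:ℤ) + 2*(j:ℤ) + 1))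

lemma mem_negChain {m s : ℕ} {x : ℤ} :
    x ∈ negChain m s ↔ ∃ j : ℕ, j < s ∧ x = -((m:ℤ) + 2*j + 1) := by
  simp [negChain, Finset.mem_image, Finset.mem_range]
  constructor
  · rintro ⟨j, hj, rfl⟩; exact ⟨j, hj, rfl⟩
  · rintro ⟨j, hj, rfl⟩; exact ⟨j, hj, rfl⟩

lemma negChain_sum (m s : ℕ) :
    pval (negChain m s) = phi ^ (-(m:ℤ)) - phi ^ (-(m:ℤ) - 2*s) := by
  induction s with
  | zero => simp [negChain, pval]
  | succ s ih =>
    have hnot : -((m:ℤ) + 2*s + 1) ∉ negChain m s := by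
      rw [mem_negChain]; rintro ⟨j, hj, hx⟩; omega
    have : negChain m (s+1) = insert (-((m:ℤ) + 2*s + 1)) (negChain m s) := by
      ext x
      rw [mem_negChain, Finset.mem_insert, mem_negChain]
      constructor
      · rintro ⟨j, hj, rfl⟩
        rcases Nat.lt_succ_iff_lt_or_eq.mp hj with h | rfl
        · right; exact ⟨j, h, rfl⟩
        · left; rfl
      · rintro (rfl | ⟨j, hj, rfl⟩)
        · exact ⟨s, by omega, rfl⟩
        · exact ⟨j, by omega, rfl⟩
    rw [this]
    unfold pval at *
    rw [Finset.sum_insert hnot, ih]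
    have := phi_rec' (-(m:ℤ) - 2*s) (-((m:ℤ) + 2*s + 1)) (-(m:ℤ) - 2*(s+1)) (by push_cast [Int.natCast_succ]; ring) (by push_cast; ring)
    push_cast
    push_cast at this
    linarith

lemma pval_insert {x : ℤ} {B : Finset ℤ} (h : x ∉ B) :
    pval (insert x B) = phi ^ x + pval B := Finset.sum_insert h

lemma pval_union {B C : Finset ℤ} (h : Disjoint B C) :
    pval (B ∪ C) = pval B + pval C := Finset.sum_union h

lemma pval_erase {t : ℤ} {A : Finset ℤ} (h : t ∈ A) :
    pval (A.erase t) = pval A - phi ^ t := by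
  have := Finset.add_sum_erase _ (fun i => phi ^ i) h
  unfold pval; linarith [this]

lemma construct (b : ℕ → ℕ) (hb : ∀ j, b j ≤ 1) :
    ∀ r : ℕ,
    (∀ j : ℕ, j + 1 < r → b j * b (j+1) = 0) →
    (¬ ∃ i : ℕ, 2*i+1 < r ∧ b 0 = 1 ∧ b (2*i+1) = 1 ∧ ∀ k, 1 ≤ k → k ≤ 2*i → b k = 0) →
    ∃ (A : Finset ℤ) (n : ℕ),
      Sparse A ∧
      (∀ j : ℕ, j < r → ((j:ℤ) ∈ A ↔ b j = 1)) ∧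
      (∀ i ∈ A, 0 ≤ i → i < (r:ℤ)) ∧
      (∀ i ∈ A, i < 0 → ∃ t : ℤ, t ∈ A ∧ 0 ≤ t ∧ -i ≤ t + 1 ∧ (t % 2 = 0 → -i ≤ t)) ∧
      ((∀ i ∈ A, 0 ≤ i) → ∀ j : ℕ, 1 ≤ j → j < r → b j = 0) ∧
      pval A = n := by
  intro r
  induction r with
  | zero =>
    intro _ _
    exact ⟨∅, 0, by simp [Sparse], by simp, by simp, by simp, by simp, by simp [pval]⟩
  | succ r ih =>
    intro hadj hsuf
    obtain ⟨A, n, hsp, hmem, hup, hneg, hzero, hval⟩ :=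
      ih (fun j hj => hadj j (by omega))
        (fun ⟨i, h1, h2, h3, h4⟩ => hsuf ⟨i, by omega, h2, h3, h4⟩)
    by_cases hbr : b r = 1
    · -- add a new top digit at position r
      by_cases hr0 : r = 0
      · -- base: word is just "1"
        subst hr0
        have hAempty : A = ∅ := by
          rcases A.eq_empty_or_nonempty with h | ⟨x, hx⟩
          · exact h
          · exfalso
            rcases lt_or_ge x 0 with hx0 | hx0
            · obtain ⟨t, htA, ht0, -, -⟩ := hneg x hx hx0
              have := hup t htA ht0; omega
            · have := hup x hx hx0; omega
        subst hAempty
        refine ⟨{0}, 1, ?_, ?_, ?_, ?_, ?_, ?_⟩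
        · intro i hi; simp at hi ⊢; omega
        · intro j hj; interval_cases j; simp [hbr]
        · intro i hi _; simp at hi; omega
        · intro i hi h0; simp at hi; omega
        · intro _ j hj1 hj2; omega
        · simp [pval]
      · -- r ≥ 1
        have hr1 : b (r-1) = 0 := by
          have h := hadj (r-1) (by omega)
          rw [show r - 1 + 1 = r by omega] at h
          rcases Nat.mul_eq_zero.mp h with h' | h'
          · exact h'
          · omega
        have htop : ∀ i ∈ A, 0 ≤ i → i ≤ (r:ℤ) - 2 := by
          intro i hi h0
          have hlt := hup i hi h0
          lift i to ℕ using h0 with j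
          have hj : j < r := by exact_mod_cast hlt
          have hbj : b j = 1 := (hmem j hj).mp hi
          have hjne : j ≠ r - 1 := by intro h; rw [h, hr1] at hbj; omega
          omega
        have hdep1 : ∀ i ∈ A, i < 0 → -i ≤ (r:ℤ) - 1 := by
          intro i hi h0
          obtain ⟨t, htA, ht0, hle, hev⟩ := hneg i hi h0
          have htt := htop t htA ht0
          omega
        have hLr := luc_real r
        rcases Nat.even_or_odd r with ⟨k, hk⟩ | ⟨k, hk⟩
        · -- r = k + k, even : new rep = A ∪ {r, -r}
          have hk1 : 1 ≤ k := by omega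
          have hdep2 : ∀ i ∈ A, i < 0 → -i ≤ (r:ℤ) - 2 := by
            intro i hi h0
            obtain ⟨t, htA, ht0, hle, hev⟩ := hneg i hi h0
            have htt := htop t htA ht0
            by_cases ht2 : t % 2 = 0
            · have := hev ht2; omega
            · omega
          have hrA : (r:ℤ) ∉ A := fun h => by have := hup _ h (by positivity); omega
          have hnrA : -(r:ℤ) ∉ A := fun h => by have := hdep1 _ h (by omega); omega
          refine ⟨insert (r:ℤ) (insert (-(r:ℤ)) A), n + Luc r, ?_, ?_, ?_, ?_, ?_, ?_⟩
          · intro i hi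
            simp only [Finset.mem_insert] at hi ⊢
            push_neg
            rcases hi with rfl | rfl | hi
            · refine ⟨by omega, by omega, fun h => ?_⟩
              have := hup _ h (by omega); omega
            · refine ⟨by omega, by omega, fun h => ?_⟩
              rcases lt_or_ge (-(r:ℤ)+1) 0 with h0 | h0
              · have := hdep2 _ h h0; omega
              · have := hup _ h h0; omega
            · refine ⟨?_, ?_, hsp i hi⟩
              · intro h
                have h0 : 0 ≤ i := by omega
                have := htop i hi h0; omega
              · intro h
                have h0 : i < 0 := by omega
                have := hdep1 i hi h0; omega
          · intro j hj
            simp only [Finset.mem_insert]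
            rcases Nat.lt_succ_iff_lt_or_eq.mp hj with h | rfl
            · constructor
              · rintro (h1 | h1 | h1)
                · omega
                · omega
                · exact (hmem j h).mp h1
              · intro h1; exact Or.inr (Or.inr ((hmem j h).mpr h1))
            · exact ⟨fun _ => hbr, fun _ => Or.inl rfl⟩
          · intro i hi h0
            simp only [Finset.mem_insert] at hi
            rcases hi with rfl | rfl | hi
            · omega
            · omega
            · have := hup i hi h0; omega
          · intro i hi h0
            simp only [Finset.mem_insert] at hi
            refine ⟨(r:ℤ), by simp, by positivity, ?_, ?_⟩
            · rcases hi with rfl | rfl | hi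
              · omega
              · omega
              · have := hdep2 i hi h0; omega
            · intro _
              rcases hi with rfl | rfl | hi
              · omega
              · omega
              · have := hdep2 i hi h0; omega
          · intro h
            have := h (-(r:ℤ)) (by simp)
            omega
          · have h2 : (r:ℤ) ∉ insert (-(r:ℤ)) A := by
              simp only [Finset.mem_insert]; push_neg
              exact ⟨by omega, hrA⟩
            rw [pval_insert h2, pval_insert hnrA, hval]
            have heven : ((-1:ℝ))^r = 1 := Even.neg_one_pow ⟨k, hk⟩
            rw [heven, one_mul] at hLr
            push_cast
            rw [hLr]
            ring
        · -- r = 2k+1, odd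
          by_cases hS : ∃ x, x ∈ A ∧ x < 0
          · -- negative part nonempty: μ = minimal (deepest) element
            obtain ⟨x0, hx00, hx01⟩ := hS
            have hSne : (A.filter (fun i => i < 0)).Nonempty :=
              ⟨x0, Finset.mem_filter.mpr ⟨hx00, hx01⟩⟩
            obtain ⟨μ, hμS, hμmin⟩ : ∃ μ ∈ A.filter (fun i => i < 0),
                ∀ i ∈ A.filter (fun i => i < 0), μ ≤ i :=
              ⟨_, (A.filter _).min'_mem hSne, fun i hi => (A.filter _).min'_le i hi⟩
            have hμA : μ ∈ A := (Finset.mem_filter.mp hμS).1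
            have hμ0 : μ < 0 := (Finset.mem_filter.mp hμS).2
            have hmin : ∀ i ∈ A, i < 0 → μ ≤ i := fun i hi h0 =>
              hμmin i (Finset.mem_filter.mpr ⟨hi, h0⟩)
            have hμdep : -μ ≤ (r:ℤ) - 1 := hdep1 μ hμA hμ0
            obtain ⟨mn, hmn⟩ : ∃ mn : ℕ, μ = -(mn:ℤ) := ⟨(-μ).toNat, by omega⟩
            have hmn1 : 1 ≤ mn := by omega
            have hmn2k : mn ≤ 2*k := by omega
            have hLr' : (Luc r : ℝ) = phi ^ (r:ℤ) - phi ^ (-(r:ℤ)) := by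
              rw [hLr, Odd.neg_one_pow ⟨k, by omega⟩]; ring
            rcases Nat.even_or_odd mn with ⟨u, hu⟩ | ⟨u, hu⟩
            · -- deepest depth mn = 2u even
              refine ⟨insert (r:ℤ) (insert (-(r:ℤ)-1) ((A.erase μ) ∪ negChain mn (k-u))),
                n + Luc r, ?_, ?_, ?_, ?_, ?_, ?_⟩
              · intro i hi
                simp only [Finset.mem_insert, Finset.mem_union, Finset.mem_erase,
                  mem_negChain] at hi ⊢
                push_neg
                rcases hi with rfl | rfl | ⟨hine, hiA⟩ | ⟨j, hj, rfl⟩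
                · refine ⟨by omega, by omega, ⟨fun _ h => ?_, fun j hj => by omega⟩⟩
                  have := hup _ h (by omega); omega
                · refine ⟨by omega, by omega, ⟨fun _ h => ?_, fun j hj => by omega⟩⟩
                  have := hdep1 _ h (by omega); omega
                · refine ⟨?_, ?_, ⟨fun _ h => hsp i hiA h, fun j hj hij => ?_⟩⟩
                  · intro h
                    have h0 : 0 ≤ i := by omega
                    have := htop i hiA h0; omega
                  · intro h
                    have h0 : i < 0 := by omega
                    have := hdep1 i hiA h0; omega
                  · have h0 : i < 0 := by omega
                    have := hmin i hiA h0; omega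
                · refine ⟨by omega, by omega, ⟨fun hne h => ?_, fun j' hj' => by omega⟩⟩
                  have h0 : -((mn:ℤ) + 2*j + 1) + 1 < 0 := by omega
                  have := hmin _ h h0; omega
              · intro j hj
                simp only [Finset.mem_insert, Finset.mem_union, Finset.mem_erase,
                  mem_negChain]
                rcases Nat.lt_succ_iff_lt_or_eq.mp hj with h | rfl
                · constructor
                  · rintro (h1 | h1 | ⟨-, h1⟩ | ⟨j', hj', h1⟩)
                    · omega
                    · omega
                    · exact (hmem j h).mp h1
                    · omega
                  · intro h1
                    exact Or.inr (Or.inr (Or.inl ⟨by omega, (hmem j h).mpr h1⟩))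
                · exact ⟨fun _ => hbr, fun _ => Or.inl rfl⟩
              · intro i hi h0
                simp only [Finset.mem_insert, Finset.mem_union, Finset.mem_erase,
                  mem_negChain] at hi
                rcases hi with rfl | rfl | ⟨-, hiA⟩ | ⟨j, hj, rfl⟩
                · omega
                · omega
                · have := hup i hiA h0; omega
                · omega
              · intro i hi h0
                simp only [Finset.mem_insert, Finset.mem_union, Finset.mem_erase,
                  mem_negChain] at hi
                refine ⟨(r:ℤ), by simp, by positivity, ?_, by intro h2; omega⟩
                rcases hi with rfl | rfl | ⟨-, hiA⟩ | ⟨j, hj, rfl⟩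
                · omega
                · omega
                · have := hdep1 i hiA h0; omega
                · omega
              · intro h
                have := h (-(r:ℤ)-1) (by simp)
                omega
              · have hdisj : Disjoint (A.erase μ) (negChain mn (k-u)) := by
                  rw [Finset.disjoint_left]
                  intro x hx1 hx2
                  rw [mem_negChain] at hx2
                  obtain ⟨j, hj, rfl⟩ := hx2
                  have hx0 : -((mn:ℤ) + 2*j + 1) < 0 := by omega
                  have := hmin _ (Finset.mem_of_mem_erase hx1) hx0
                  omega
                have h2 : -(r:ℤ)-1 ∉ (A.erase μ) ∪ negChain mn (k-u) := by
                  simp only [Finset.mem_union, Finset.mem_erase, mem_negChain]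
                  push_neg
                  constructor
                  · intro _ h
                    have := hdep1 _ h (by omega); omega
                  · intro j hj; omega
                have h3 : (r:ℤ) ∉ insert (-(r:ℤ)-1) ((A.erase μ) ∪ negChain mn (k-u)) := by
                  simp only [Finset.mem_insert, Finset.mem_union, Finset.mem_erase,
                    mem_negChain]
                  push_neg
                  refine ⟨by omega, ⟨fun _ h => ?_, fun j hj => by omega⟩⟩
                  have := hup _ h (by positivity); omega
                rw [pval_insert h3, pval_insert h2, pval_union hdisj, pval_erase hμA,
                  negChain_sum, hval, hmn]
                have ex : -((mn:ℕ):ℤ) - 2*((k-u:ℕ):ℤ) = -(r:ℤ)+1 := by omega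
                rw [ex]
                have e1 : phi ^ (-(r:ℤ)+1) = phi ^ (-(r:ℤ)) + phi ^ (-(r:ℤ)-1) :=
                  phi_rec' _ _ _ (by ring) (by ring)
                push_cast
                rw [hLr']
                linarith [e1]
            · -- deepest depth mn = 2u+1 odd
              have huk : u < k := by omega
              refine ⟨insert (r:ℤ) ((A.erase μ) ∪ negChain mn (k-u)),
                n + Luc r, ?_, ?_, ?_, ?_, ?_, ?_⟩
              · intro i hi
                simp only [Finset.mem_insert, Finset.mem_union, Finset.mem_erase,
                  mem_negChain] at hi ⊢
                push_neg
                rcases hi with rfl | ⟨hine, hiA⟩ | ⟨j, hj, rfl⟩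
                · refine ⟨by omega, ⟨fun _ h => ?_, fun j hj => by omega⟩⟩
                  have := hup _ h (by omega); omega
                · refine ⟨?_, ⟨fun _ h => hsp i hiA h, fun j hj hij => ?_⟩⟩
                  · intro h
                    have h0 : 0 ≤ i := by omega
                    have := htop i hiA h0; omega
                  · have h0 : i < 0 := by omega
                    have := hmin i hiA h0; omega
                · refine ⟨by omega, ⟨fun hne h => ?_, fun j' hj' => by omega⟩⟩
                  have h0 : -((mn:ℤ) + 2*j + 1) + 1 < 0 := by omega
                  have := hmin _ h h0; omega
              · intro j hj
                simp only [Finset.mem_insert, Finset.mem_union, Finset.mem_erase,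
                  mem_negChain]
                rcases Nat.lt_succ_iff_lt_or_eq.mp hj with h | rfl
                · constructor
                  · rintro (h1 | ⟨-, h1⟩ | ⟨j', hj', h1⟩)
                    · omega
                    · exact (hmem j h).mp h1
                    · omega
                  · intro h1
                    exact Or.inr (Or.inl ⟨by omega, (hmem j h).mpr h1⟩)
                · exact ⟨fun _ => hbr, fun _ => Or.inl rfl⟩
              · intro i hi h0
                simp only [Finset.mem_insert, Finset.mem_union, Finset.mem_erase,
                  mem_negChain] at hi
                rcases hi with rfl | ⟨-, hiA⟩ | ⟨j, hj, rfl⟩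
                · omega
                · have := hup i hiA h0; omega
                · omega
              · intro i hi h0
                simp only [Finset.mem_insert, Finset.mem_union, Finset.mem_erase,
                  mem_negChain] at hi
                refine ⟨(r:ℤ), by simp, by positivity, ?_, by intro h2; omega⟩
                rcases hi with rfl | ⟨-, hiA⟩ | ⟨j, hj, rfl⟩
                · omega
                · have := hdep1 i hiA h0; omega
                · omega
              · intro h
                have hc : -((mn:ℤ) + 2*(0:ℕ) + 1) ∈ negChain mn (k-u) :=
                  mem_negChain.mpr ⟨0, by omega, rfl⟩
                have := h (-((mn:ℤ) + 2*(0:ℕ) + 1))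
                  (by simp only [Finset.mem_insert, Finset.mem_union]
                      exact Or.inr (Or.inr hc))
                push_cast at this
                omega
              · have hdisj : Disjoint (A.erase μ) (negChain mn (k-u)) := by
                  rw [Finset.disjoint_left]
                  intro x hx1 hx2
                  rw [mem_negChain] at hx2
                  obtain ⟨j, hj, rfl⟩ := hx2
                  have hx0 : -((mn:ℤ) + 2*j + 1) < 0 := by omega
                  have := hmin _ (Finset.mem_of_mem_erase hx1) hx0
                  omega
                have h3 : (r:ℤ) ∉ (A.erase μ) ∪ negChain mn (k-u) := by
                  simp only [Finset.mem_union, Finset.mem_erase, mem_negChain]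
                  push_neg
                  refine ⟨fun _ h => ?_, fun j hj => by omega⟩
                  have := hup _ h (by positivity); omega
                rw [pval_insert h3, pval_union hdisj, pval_erase hμA,
                  negChain_sum, hval, hmn]
                have ex : -((mn:ℕ):ℤ) - 2*((k-u:ℕ):ℤ) = -(r:ℤ) := by omega
                rw [ex]
                push_cast
                rw [hLr']
                ring
          · -- no negative digits at all
            push_neg at hS
            have hall : ∀ i ∈ A, 0 ≤ i := fun i hi => by have := hS i hi; omega
            have hz := hzero hall
            have hb0 : b 0 = 0 := by
              by_contra h
              have hb01 : b 0 = 1 := by have := hb 0; omega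
              refine hsuf ⟨k, by omega, hb01, ?_, fun k' h1 h2 => hz k' h1 (by omega)⟩
              rw [show 2*k+1 = r by omega]; exact hbr
            have hA : A = ∅ := by
              rcases A.eq_empty_or_nonempty with h | ⟨x, hx⟩
              · exact h
              · exfalso
                have h0 := hall x hx
                have hlt := hup x hx h0
                lift x to ℕ using h0 with j
                have hj : j < r := by exact_mod_cast hlt
                have hbj := (hmem j hj).mp hx
                rcases Nat.eq_zero_or_pos j with rfl | hj1
                · rw [hb0] at hbj; omega
                · rw [hz j hj1 hj] at hbj; omega
            subst hA
            refine ⟨insert (r:ℤ) (insert (-(r:ℤ)-1) (negChain 0 k)), Luc r + 1,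
              ?_, ?_, ?_, ?_, ?_, ?_⟩
            · intro i hi
              simp only [Finset.mem_insert, mem_negChain] at hi ⊢
              push_neg
              rcases hi with rfl | rfl | ⟨j, hj, rfl⟩
              · exact ⟨by omega, by omega, fun j hj => by omega⟩
              · exact ⟨by omega, by omega, fun j hj => by omega⟩
              · exact ⟨by omega, by omega, fun j' hj' => by omega⟩
            · intro j hj
              simp only [Finset.mem_insert, mem_negChain]
              rcases Nat.lt_succ_iff_lt_or_eq.mp hj with h | rfl
              · constructor
                · rintro (h1 | h1 | ⟨j', hj', h1⟩)
                  · omega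
                  · omega
                  · omega
                · intro h1
                  exfalso
                  rcases Nat.eq_zero_or_pos j with rfl | hj1
                  · omega
                  · have := hz j hj1 h; omega
              · exact ⟨fun _ => hbr, fun _ => Or.inl rfl⟩
            · intro i hi h0
              simp only [Finset.mem_insert, mem_negChain] at hi
              rcases hi with rfl | rfl | ⟨j', hj', rfl⟩
              · omega
              · omega
              · omega
            · intro i hi h0
              simp only [Finset.mem_insert, mem_negChain] at hi
              refine ⟨(r:ℤ), by simp, by positivity, ?_, by intro h2; omega⟩
              rcases hi with rfl | rfl | ⟨j', hj', rfl⟩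
              · omega
              · omega
              · omega
            · intro h
              have := h (-(r:ℤ)-1) (by simp)
              omega
            · have h1 : (-(r:ℤ)-1) ∉ negChain 0 k := by
                rw [mem_negChain]; rintro ⟨j, hj, h⟩; omega
              have h2 : (r:ℤ) ∉ insert (-(r:ℤ)-1) (negChain 0 k) := by
                simp only [Finset.mem_insert, mem_negChain]
                push_neg
                exact ⟨by omega, fun j hj => by omega⟩
              rw [pval_insert h2, pval_insert h1, negChain_sum]
              have hLr' : (Luc r : ℝ) = phi ^ (r:ℤ) - phi ^ (-(r:ℤ)) := by
                rw [hLr, Odd.neg_one_pow ⟨k, by omega⟩]; ring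
              have ex : -((0:ℕ):ℤ) - 2*((k:ℕ):ℤ) = -(r:ℤ)+1 := by omega
              rw [ex]
              have e0 : phi ^ (-((0:ℕ):ℤ)) = 1 := by norm_num
              have e1 : phi ^ (-(r:ℤ)+1) = phi ^ (-(r:ℤ)) + phi ^ (-(r:ℤ)-1) :=
                phi_rec' _ _ _ (by ring) (by ring)
              rw [e0]
              push_cast
              rw [hLr']
              linarith [e1]
    · -- b r = 0 : keep A
      have hbr0 : b r = 0 := by have := hb r; omega
      refine ⟨A, n, hsp, ?_, ?_, hneg, ?_, hval⟩
      · intro j hj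
        rcases Nat.lt_succ_iff_lt_or_eq.mp hj with h | rfl
        · exact hmem j h
        · constructor
          · intro hmem'; exact absurd (hup _ hmem' (by positivity)) (by omega)
          · intro h; omega
      · intro i hi h0
        have := hup i hi h0; omega
      · intro h j hj1 hj2
        rcases Nat.lt_succ_iff_lt_or_eq.mp hj2 with h' | rfl
        · exact hzero h j hj1 h'
        · exact hbr0

lemma canon_digit_one {x : ℝ} {a : ℤ →₀ ℕ} (h : IsPhiRep x a) {i : ℤ}
    (hi : i ∈ a.support) : a i = 1 := by
  have h1 := h.1 i
  have h2 : a i ≠ 0 := Finsupp.mem_support_iff.mp hi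
  omega

lemma rep_pval {x : ℝ} {a : ℤ →₀ ℕ} (h : IsPhiRep x a) : x = pval a.support := by
  rw [h.2]
  exact Finset.sum_congr rfl fun i hi => by rw [canon_digit_one h hi]; norm_num

lemma canon_sparse {x : ℝ} {a : ℤ →₀ ℕ} (h : IsCanonRep x a) : Sparse a.support := by
  intro i hi hi1
  have h1 := canon_digit_one h.1 hi
  have h2 := canon_digit_one h.1 hi1
  have := h.2 i
  rw [h1, h2] at this
  omega

lemma canon_unique {x : ℝ} {a a' : ℤ →₀ ℕ} (h : IsCanonRep x a) (h' : IsCanonRep x a') :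
    a = a' := by
  have hsupp : a.support = a'.support := by
    apply pval_inj (canon_sparse h) (canon_sparse h')
    rw [← rep_pval h.1, ← rep_pval h'.1]
  ext i
  by_cases hi : i ∈ a.support
  · rw [canon_digit_one h.1 hi, canon_digit_one h'.1 (hsupp ▸ hi)]
  · have hi' : i ∉ a'.support := hsupp ▸ hi
    rw [Finsupp.notMem_support_iff.mp hi, Finsupp.notMem_support_iff.mp hi']

lemma sparse_subset {A B : Finset ℤ} (h : B ⊆ A) (hA : Sparse A) : Sparse B :=
  fun i hi hi1 => hA i (h hi) (h hi1)

-- forward direction: the forbidden-suffix condition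
lemma forward_suffix (dn : ℤ →₀ ℕ) (n : ℕ) (hc : IsCanonRep (n:ℝ) dn)
    (i : ℕ) (hi : 1 ≤ i) (h0 : dn 0 = 1) (h21 : dn ((2*i+1 : ℕ) : ℤ) = 1)
    (hz : ∀ k : ℕ, 1 ≤ k → k ≤ 2*i → dn (k : ℤ) = 0) : False := by
  set s := dn.support with hs
  have hsp : Sparse s := canon_sparse hc
  have hsum : (n:ℝ) = pval s := rep_pval hc.1
  set N := s.filter (fun x => x < 0) with hN
  set P := s.filter (fun x => ¬ x < 0) with hP
  have hsplit : pval N + pval P = pval s := Finset.sum_filter_add_sum_filter_not s _ _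
  have hNsub : N ⊆ s := Finset.filter_subset _ _
  have hPsub : P ⊆ s := Finset.filter_subset _ _
  -- membership facts
  have h0P : (0:ℤ) ∈ P := by
    rw [hP, Finset.mem_filter]
    exact ⟨Finsupp.mem_support_iff.mpr (by omega), by omega⟩
  have hIP : ((2*i+1 : ℕ) : ℤ) ∈ P := by
    rw [hP, Finset.mem_filter]
    refine ⟨Finsupp.mem_support_iff.mpr (by omega), by omega⟩
  -- right part: N ⊆ (-∞, -2], so 0 ≤ pval N < φ⁻¹
  have hm1 : ∀ x ∈ N, x ≤ -2 := by
    intro x hx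
    rw [hN, Finset.mem_filter] at hx
    have hxne : x ≠ -1 := by
      intro h
      have h2 := hc.2 (-1)
      rw [show (-1:ℤ)+1 = 0 by ring, h0] at h2
      have h3 : dn (-1) = 0 := by omega
      subst h
      exact Finsupp.mem_support_iff.mp hx.1 h3
    omega
  have hRpos : 0 ≤ pval N := pval_nonneg N
  have hRlt : pval N < phi ^ (-1 : ℤ) := by
    have := pval_lt N (-2) (sparse_subset hNsub hsp) hm1
    rwa [show (-2:ℤ)+1 = -1 by ring] at this
  -- all P elements are nonnegative
  have hPnn : ∀ x ∈ P, 0 ≤ x := by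
    intro x hx
    rw [hP, Finset.mem_filter] at hx
    omega
  -- left part via Lucas numbers
  have hsplitx : ∀ x ∈ P, phi ^ x = ((Luc x.toNat : ℝ)) - (-1:ℝ)^(x.toNat) * phi ^ (-x) := by
    intro x hx
    have h1 := luc_real x.toNat
    rw [Int.toNat_of_nonneg (hPnn x hx)] at h1
    linarith
  set M : ℕ := ∑ x ∈ P, Luc x.toNat with hM
  set f : ℤ → ℝ := fun x => (-1:ℝ)^(x.toNat) * phi ^ (-x) with hf
  set T : ℝ := ∑ x ∈ P, f x with hT
  have hPval : pval P = (M:ℝ) - T := by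
    rw [hM, hT]
    push_cast
    rw [← Finset.sum_sub_distrib]
    refine Finset.sum_congr rfl fun x hx => ?_
    rw [hf]
    exact hsplitx x hx
  -- the key integer
  have hTR : T - pval N = (M:ℝ) - n := by
    rw [← hsplit, hPval] at hsum
    linarith
  -- decompose T
  set I : ℤ := ((2*i+1 : ℕ) : ℤ) with hI
  have hIne : I ≠ 0 := by rw [hI]; omega
  have hI0 : I ∈ P.erase 0 := Finset.mem_erase.mpr ⟨hIne, hIP⟩
  set P2 := (P.erase 0).erase I with hP2
  have hT1 : T = f 0 + (f I + ∑ x ∈ P2, f x) := by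
    rw [hT, ← Finset.add_sum_erase _ f h0P, ← Finset.add_sum_erase _ f hI0]
  have hf0 : f 0 = 1 := by simp [hf]
  have hfI : f I = -phi ^ (-I) := by
    rw [hf, hI]
    simp only [Int.toNat_natCast]
    rw [Odd.neg_one_pow ⟨i, by omega⟩]
    ring
  -- P2 elements are ≥ 2i+3
  have hP2lb : ∀ x ∈ P2, (2*(i:ℤ)+3) ≤ x := by
    intro x hx
    rw [hP2] at hx
    have hxI : x ≠ I := (Finset.mem_erase.mp hx).1
    have hx0 : x ≠ 0 := (Finset.mem_erase.mp (Finset.mem_of_mem_erase hx)).1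
    have hxP : x ∈ P := Finset.mem_of_mem_erase (Finset.mem_of_mem_erase hx)
    have hxnn : 0 ≤ x := hPnn x hxP
    have hxs : x ∈ s := hPsub hxP
    have hdx : dn x ≠ 0 := Finsupp.mem_support_iff.mp hxs
    -- x cannot be in [1, 2i]
    have hmid : ¬ (1 ≤ x ∧ x ≤ 2*(i:ℤ)) := by
      rintro ⟨ha, hb⟩
      lift x to ℕ using hxnn with j
      exact hdx (hz j (by omega) (by omega))
    -- x cannot be 2i+2
    have h2i2 : x ≠ 2*(i:ℤ)+2 := by
      intro h
      have h2 := hc.2 I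
      rw [h21] at h2
      have : dn (I + 1) = 0 := by omega
      rw [show I + 1 = 2*(i:ℤ)+2 by rw [hI]; push_cast; ring] at this
      rw [h] at hdx
      exact hdx this
    have : x ≠ 2*(i:ℤ)+1 := by rw [hI] at hxI; push_cast at hxI; omega
    omega
  -- bound the tail ε
  set ε : ℝ := ∑ x ∈ P2, f x with hε
  have htail : |ε| < phi ^ (-(2*(i:ℤ)+2)) := by
    have h1 : |ε| ≤ ∑ x ∈ P2, phi ^ (-x) := by
      refine le_trans (Finset.abs_sum_le_sum_abs _ _) (Finset.sum_le_sum ?_)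
      intro x hx
      rw [hf]
      rw [abs_mul, abs_pow, abs_neg, abs_one, one_pow, one_mul,
        abs_of_pos (phi_zpow_pos _)]
    have h2 : ∑ x ∈ P2, phi ^ (-x) = pval (P2.image (fun x => -x)) := by
      rw [pval, Finset.sum_image (by intro a _ b _ h; exact neg_inj.mp h)]
    have h3 : Sparse (P2.image (fun x => -x)) := by
      intro y hy hy1
      simp only [Finset.mem_image] at hy hy1
      obtain ⟨x, hx, rfl⟩ := hy
      obtain ⟨x', hx', hx'e⟩ := hy1
      have hxe : x' = x - 1 := by omega
      subst hxe
      have hxs : x - 1 ∈ s := hPsub (Finset.mem_of_mem_erase (Finset.mem_of_mem_erase hx'))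
      have hxs2 : x ∈ s := hPsub (Finset.mem_of_mem_erase (Finset.mem_of_mem_erase hx))
      exact hsp (x-1) hxs (by rwa [show x - 1 + 1 = x by ring])
    have h4 : ∀ y ∈ P2.image (fun x => -x), y ≤ -(2*(i:ℤ)+3) := by
      intro y hy
      simp only [Finset.mem_image] at hy
      obtain ⟨x, hx, rfl⟩ := hy
      have := hP2lb x hx
      omega
    have h5 := pval_lt _ _ h3 h4
    rw [show -(2*(i:ℤ)+3)+1 = -(2*(i:ℤ)+2) by ring] at h5
    rw [h2] at h1
    linarith
  -- assemble: T = 1 - φ^{-(2i+1)} + ε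
  have hTval : T = 1 - phi ^ (-(2*(i:ℤ)+1)) + ε := by
    rw [hT1, hf0, hfI, hε, hI]
    push_cast
    ring
  -- integer z = M - n lies strictly between 0 and 1
  have key1 : phi ^ (-(2*(i:ℤ)+1)) = phi ^ (-(2*(i:ℤ)+2)) + phi ^ (-(2*(i:ℤ)+3)) :=
    phi_rec' _ _ _ (by ring) (by ring)
  have key2 : phi ^ (-(2*(i:ℤ))) = phi ^ (-(2*(i:ℤ)+1)) + phi ^ (-(2*(i:ℤ)+2)) :=
    phi_rec' _ _ _ (by ring) (by ring)
  have key3 : (1:ℝ) = phi ^ (-1:ℤ) + phi ^ (-2:ℤ) := by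
    have := phi_rec' 0 (-1) (-2) (by ring) (by ring)
    simpa using this
  have key4 : phi ^ (-(2*(i:ℤ))) ≤ phi ^ (-2:ℤ) := phi_zpow_le (by omega)
  have key5 : 0 < phi ^ (-(2*(i:ℤ)+3)) := phi_zpow_pos _
  have habs1 : ε ≤ phi ^ (-(2*(i:ℤ)+2)) := by
    have := abs_le.mp (le_of_lt htail); linarith [this.2]
  have habs2 : -phi ^ (-(2*(i:ℤ)+2)) ≤ ε := by
    have := abs_le.mp (le_of_lt htail); linarith [this.1]
  have hub : (M:ℝ) - n < 1 := by
    rw [← hTR, hTval]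
    linarith
  have hlb : (0:ℝ) < (M:ℝ) - n := by
    rw [← hTR, hTval]
    linarith
  have hz1 : ((M:ℤ) - (n:ℤ) : ℤ) < 1 := by exact_mod_cast (by push_cast; linarith [hub] : ((M:ℤ) - (n:ℤ) : ℝ) < 1)
  have hz2 : (0:ℤ) < (M:ℤ) - (n:ℤ) := by exact_mod_cast (by push_cast; linarith [hlb] : (0:ℝ) < ((M:ℤ) - (n:ℤ) : ℝ))
  omega

/-- A binary word `b_{r-1} ⋯ b_0` occurs as the nonnegative-position digits of the
canonical φ-representation of some natural number iff it has no two adjacent 1's and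
no suffix of the form 1(00)^i 1. Here `d n` denotes the canonical φ-representation of `n`. -/
theorem left_part_characterization
    (d : ℕ → ℤ →₀ ℕ) (hd : ∀ n : ℕ, IsCanonRep n (d n))
    (r : ℕ) (hr : 1 ≤ r) (b : ℕ → ℕ) (hb : ∀ j, b j ≤ 1) :
    (∃ n : ℕ, (∀ j : ℕ, j ≤ r - 1 → d n (j : ℤ) = b j) ∧
        ∀ j : ℕ, r ≤ j → d n (j : ℤ) = 0) ↔
      ((∀ j : ℕ, j < r - 1 → b j * b (j + 1) = 0) ∧
        ¬ ∃ i : ℕ, 2 * i + 1 ≤ r - 1 ∧ b 0 = 1 ∧ b (2 * i + 1) = 1 ∧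
            ∀ k : ℕ, 1 ≤ k → k ≤ 2 * i → b k = 0) := by
  constructor
  · rintro ⟨n, hm1, hm2⟩
    constructor
    · intro j hj
      have e1 := hm1 j (by omega)
      have e2 := hm1 (j+1) (by omega)
      have hcanon := (hd n).2 (j:ℤ)
      rw [e1, show (j:ℤ)+1 = ((j+1:ℕ):ℤ) by push_cast; ring, e2] at hcanon
      exact hcanon
    · rintro ⟨i, hile, hb0, hb21, hbz⟩
      rcases Nat.eq_zero_or_pos i with rfl | hi1
      · have e1 := hm1 0 (by omega)
        have e2 := hm1 1 (by omega)
        have hcanon := (hd n).2 0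
        rw [show ((0:ℕ):ℤ) = (0:ℤ) by norm_num] at e1
        rw [show (0:ℤ)+1 = ((1:ℕ):ℤ) by norm_num] at hcanon
        rw [e1, e2] at hcanon
        rw [hb0] at hcanon
        rw [show 2*0+1 = 1 by norm_num] at hb21
        rw [hb21] at hcanon
        omega
      · refine forward_suffix (d n) n (hd n) i hi1 ?_ ?_ ?_
        · have e1 := hm1 0 (by omega)
          rw [show ((0:ℕ):ℤ) = (0:ℤ) by norm_num] at e1
          rw [e1, hb0]
        · rw [hm1 (2*i+1) (by omega), hb21]
        · intro k hk1 hk2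
          rw [hm1 k (by omega), hbz k hk1 hk2]
  · rintro ⟨hadj, hsuf⟩
    obtain ⟨A, n, hsp, hmem, hup, -, -, hval⟩ := construct b hb r
      (fun j hj => hadj j (by omega))
      (fun ⟨i, h1, h2, h3, h4⟩ => hsuf ⟨i, by omega, h2, h3, h4⟩)
    set a : ℤ →₀ ℕ := ⟨A, fun i => if i ∈ A then 1 else 0,
      fun i => by by_cases h : i ∈ A <;> simp [h]⟩ with ha
    have hcoe : ∀ i : ℤ, a i = if i ∈ A then 1 else 0 := fun i => rfl
    have hca : IsCanonRep (n:ℝ) a := by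
      refine ⟨⟨fun i => by rw [hcoe]; split <;> omega, ?_⟩, ?_⟩
      · have hsupp : a.support = A := rfl
        rw [hsupp, ← hval]
        refine (Finset.sum_congr rfl fun i hi => ?_).symm
        rw [hcoe, if_pos hi]
        norm_num
      · intro i
        rw [hcoe, hcoe]
        by_cases h : i ∈ A
        · rw [if_pos h, if_neg (hsp i h)]
        · rw [if_neg h, zero_mul]
    have heq : d n = a := canon_unique (hd n) hca
    refine ⟨n, ?_, ?_⟩
    · intro j hj
      rw [heq, hcoe]
      have hjr : j < r := by omega
      by_cases h : (j:ℤ) ∈ A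
      · rw [if_pos h, (hmem j hjr).mp h]
      · rw [if_neg h]
        have h1 : b j ≠ 1 := fun hh => h ((hmem j hjr).mpr hh)
        have := hb j; omega
    · intro j hj
      rw [heq, hcoe, if_neg]
      intro h
      have := hup _ h (by positivity)
      omega
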